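/- Let g > 1 and b > 0 with b ≠ 1 and bg ≠ 1, and define G_{b,g}:[0,1]→ℝ by G_{b,g}(z) = log( ((g−1)b + (1−bg)b^z)/(1−b) ) / log(bg). Then the argument ((g−1)b + (1−bg)b^z)/(1−b) is strictly positive for every z ∈ [0,1], G_{b,g} is an exposure curve (twice continuously differentiable, non-decreasing, concave, G_{b,g}(0)=0, G_{b,g}(1)=1, G_{b,g}'(0)>0), and it satisfies G_{b,g}'(1)/G_{b,g}'(0) = 1/g and 1/G_{b,g}'(0) = ((b−1)/log(b)) · (log(bg)/(bg−1)); that is, the induced MBBEFD distribution has point mass 1/g at 1 and mean ((b−1)/log(b))·(log(bg)/(bg−1)). -/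

import Mathlib

/-- An exposure curve: a function `G : [0,1] → ℝ` that is twice continuously
differentiable (with continuous second derivative on `[0,1]`), non-decreasing,
concave, with `G 0 = 0`, `G 1 = 1` and `G' 0 > 0`. -/
def IsExposureCurve (G : ℝ → ℝ) : Prop :=
  MonotoneOn G (Set.Icc 0 1) ∧ ConcaveOn ℝ (Set.Icc 0 1) G ∧
  G 0 = 0 ∧ G 1 = 1 ∧
  ∃ G' G'' : ℝ → ℝ,
    (∀ z ∈ Set.Icc (0:ℝ) 1, HasDerivWithinAt G (G' z) (Set.Icc 0 1) z) ∧
    (∀ z ∈ Set.Icc (0:ℝ) 1, HasDerivWithinAt G' (G'' z) (Set.Icc 0 1) z) ∧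
    ContinuousOn G'' (Set.Icc 0 1) ∧ 0 < G' 0

/-- For `g > 1`, `b > 0`, `b ≠ 1`, `bg ≠ 1`, the MBBEFD exposure curve
`G_{b,g} z = log(((g-1)b + (1-bg)bᶻ)/(1-b)) / log(bg)` has strictly positive argument
on `[0,1]`, is an exposure curve, has derivative
`G' z = (1-bg) bᶻ log b / (((g-1)b + (1-bg)bᶻ) log(bg))` on `[0,1]`, and satisfies
`G' 1 / G' 0 = 1/g` (point mass `1/g` at `1`) and
`1 / G' 0 = ((b-1)/log b)(log(bg)/(bg-1))` (the mean of the induced distribution). -/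
theorem statement19 (b g : ℝ) (hg : 1 < g) (hb : 0 < b) (hb1 : b ≠ 1)
    (hbg : b * g ≠ 1) :
    let G : ℝ → ℝ := fun z =>
      Real.log (((g - 1) * b + (1 - b * g) * b ^ z) / (1 - b)) / Real.log (b * g)
    let G' : ℝ → ℝ := fun z =>
      (1 - b * g) * b ^ z * Real.log b /
        (((g - 1) * b + (1 - b * g) * b ^ z) * Real.log (b * g))
    (∀ z ∈ Set.Icc (0:ℝ) 1, 0 < ((g - 1) * b + (1 - b * g) * b ^ z) / (1 - b)) ∧
    IsExposureCurve G ∧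
    (∀ z ∈ Set.Icc (0:ℝ) 1, HasDerivWithinAt G (G' z) (Set.Icc 0 1) z) ∧
    G' 1 / G' 0 = 1 / g ∧
    1 / G' 0 = (b - 1) / Real.log b * (Real.log (b * g) / (b * g - 1)) := by
  intro G G'
  have hg0 : (0:ℝ) < g := lt_trans zero_lt_one hg
  have hbgpos : 0 < b * g := mul_pos hb hg0
  have hL : Real.log (b * g) ≠ 0 := Real.log_ne_zero_of_pos_of_ne_one hbgpos hbg
  have hlogb : Real.log b ≠ 0 := Real.log_ne_zero_of_pos_of_ne_one hb hb1
  have hc : 1 - b * g ≠ 0 := sub_ne_zero.2 (Ne.symm hbg)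
  have h1b : 1 - b ≠ 0 := sub_ne_zero.2 (Ne.symm hb1)
  -- positivity of the argument
  have hpos : ∀ z ∈ Set.Icc (0:ℝ) 1,
      0 < ((g - 1) * b + (1 - b * g) * b ^ z) / (1 - b) := by
    intro z hz
    obtain ⟨hz0, hz1⟩ := hz
    have ht : 0 < b ^ z := Real.rpow_pos_of_pos hb z
    rcases lt_or_gt_of_ne hb1 with hblt | hbgt
    · have htub : b ^ z ≤ 1 := by
        have := Real.rpow_le_rpow_of_exponent_ge hb hblt.le hz0
        simpa using this
      have htlb : b ≤ b ^ z := by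
        have := Real.rpow_le_rpow_of_exponent_ge hb hblt.le hz1
        simpa using this
      have h1bpos : 0 < 1 - b := by linarith
      apply div_pos _ h1bpos
      rcases le_or_gt 0 (1 - b * g) with hcpos | hcneg
      · nlinarith [mul_le_mul_of_nonneg_left htlb hcpos]
      · nlinarith [mul_le_mul_of_nonneg_left htub (by linarith : (0:ℝ) ≤ b*g - 1)]
    · have htlb : (1:ℝ) ≤ b ^ z := by
        have := Real.rpow_le_rpow_of_exponent_le hbgt.le hz0
        simpa using this
      have hbg1 : 1 < b * g := by nlinarith
      apply div_pos_of_neg_of_neg _ (by linarith)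
      nlinarith [mul_le_mul_of_nonneg_left htlb (by linarith : (0:ℝ) ≤ b*g - 1)]
  have hAne : ∀ z ∈ Set.Icc (0:ℝ) 1, (g - 1) * b + (1 - b * g) * b ^ z ≠ 0 := by
    intro z hz h
    have := hpos z hz
    rw [h] at this
    simp at this
  -- derivative of G
  have hGderiv : ∀ z, ((g - 1) * b + (1 - b * g) * b ^ z ≠ 0) →
      HasDerivAt G (G' z) z := by
    intro z hA
    have hrp : HasDerivAt (fun x : ℝ => b ^ x) (b ^ z * Real.log b) z :=
      (Real.hasStrictDerivAt_const_rpow hb z).hasDerivAt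
    have hA' : HasDerivAt (fun x : ℝ => ((g - 1) * b + (1 - b * g) * b ^ x) / (1 - b))
        ((1 - b * g) * (b ^ z * Real.log b) / (1 - b)) z :=
      ((hrp.const_mul (1 - b * g)).const_add ((g - 1) * b)).div_const (1 - b)
    have hAq : ((g - 1) * b + (1 - b * g) * b ^ z) / (1 - b) ≠ 0 :=
      div_ne_zero hA h1b
    have := (hA'.log hAq).div_const (Real.log (b * g))
    convert this using 1
    show (1 - b * g) * b ^ z * Real.log b /
        (((g - 1) * b + (1 - b * g) * b ^ z) * Real.log (b * g)) = _
    field_simp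
    all_goals rfl
  have hGwithin : ∀ z ∈ Set.Icc (0:ℝ) 1, HasDerivWithinAt G (G' z) (Set.Icc 0 1) z :=
    fun z hz => (hGderiv z (hAne z hz)).hasDerivWithinAt
  -- second derivative
  set G'' : ℝ → ℝ := fun z =>
    (1 - b * g) * b ^ z * (Real.log b)^2 * ((g - 1) * b) /
      (((g - 1) * b + (1 - b * g) * b ^ z)^2 * Real.log (b * g)) with hG''def
  have hG''deriv : ∀ z, ((g - 1) * b + (1 - b * g) * b ^ z ≠ 0) →
      HasDerivAt G' (G'' z) z := by
    intro z hA
    have hrp : HasDerivAt (fun x : ℝ => b ^ x) (b ^ z * Real.log b) z :=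
      (Real.hasStrictDerivAt_const_rpow hb z).hasDerivAt
    have hN : HasDerivAt (fun x : ℝ => (1 - b * g) * b ^ x * Real.log b)
        ((1 - b * g) * (b ^ z * Real.log b) * Real.log b) z :=
      (hrp.const_mul (1 - b * g)).mul_const (Real.log b)
    have hD : HasDerivAt
        (fun x : ℝ => ((g - 1) * b + (1 - b * g) * b ^ x) * Real.log (b * g))
        ((1 - b * g) * (b ^ z * Real.log b) * Real.log (b * g)) z :=
      ((hrp.const_mul (1 - b * g)).const_add ((g - 1) * b)).mul_const (Real.log (b * g))
    have hDne : ((g - 1) * b + (1 - b * g) * b ^ z) * Real.log (b * g) ≠ 0 :=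
      mul_ne_zero hA hL
    have := hN.div hD hDne
    convert this using 1
    show (1 - b * g) * b ^ z * (Real.log b)^2 * ((g - 1) * b) /
      (((g - 1) * b + (1 - b * g) * b ^ z)^2 * Real.log (b * g)) = _
    field_simp
    ring
    all_goals rfl
  -- positivity of G'
  have hG'pos : ∀ z ∈ Set.Icc (0:ℝ) 1, 0 < G' z := by
    intro z hz
    have ht : 0 < b ^ z := Real.rpow_pos_of_pos hb z
    have hA := hpos z hz
    show 0 < (1 - b * g) * b ^ z * Real.log b /
        (((g - 1) * b + (1 - b * g) * b ^ z) * Real.log (b * g))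
    rcases lt_or_gt_of_ne hb1 with hblt | hbgt
    · have hAp : 0 < (g - 1) * b + (1 - b * g) * b ^ z :=
        (div_pos_iff.1 hA).elim (fun h => h.1) (fun h => by linarith [h.2])
      have hlb : Real.log b < 0 := Real.log_neg hb hblt
      rcases lt_or_gt_of_ne hbg with h1 | h1
      · have hLneg : Real.log (b * g) < 0 := Real.log_neg hbgpos h1
        apply div_pos_of_neg_of_neg
        · have : 0 < (1 - b * g) * b ^ z := mul_pos (by linarith) ht
          nlinarith
        · nlinarith
      · have hLpos : 0 < Real.log (b * g) := Real.log_pos h1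
        apply div_pos
        · have : (1 - b * g) * b ^ z < 0 := mul_neg_of_neg_of_pos (by linarith) ht
          nlinarith
        · nlinarith
    · have hAn : (g - 1) * b + (1 - b * g) * b ^ z < 0 := by
        rcases div_pos_iff.1 hA with h | h
        · linarith [h.2]
        · exact h.1
      have hlb : 0 < Real.log b := Real.log_pos hbgt
      have hbg1 : 1 < b * g := by nlinarith
      have hLpos : 0 < Real.log (b * g) := Real.log_pos hbg1
      apply div_pos_of_neg_of_neg
      · have : (1 - b * g) * b ^ z < 0 := mul_neg_of_neg_of_pos (by linarith) ht
        nlinarith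
      · nlinarith
  -- nonpositivity of G''
  have hG''nonpos : ∀ z ∈ Set.Icc (0:ℝ) 1, G'' z ≤ 0 := by
    intro z hz
    have ht : 0 < b ^ z := Real.rpow_pos_of_pos hb z
    have hA := hAne z hz
    have hA2 : 0 < ((g - 1) * b + (1 - b * g) * b ^ z)^2 := by positivity
    have hlb2 : 0 < (Real.log b)^2 := by positivity
    have hgb : 0 < (g - 1) * b := by nlinarith
    show (1 - b * g) * b ^ z * (Real.log b)^2 * ((g - 1) * b) /
      (((g - 1) * b + (1 - b * g) * b ^ z)^2 * Real.log (b * g)) ≤ 0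
    rcases lt_or_gt_of_ne hbg with h1 | h1
    · have hLneg : Real.log (b * g) < 0 := Real.log_neg hbgpos h1
      apply le_of_lt
      apply div_neg_of_pos_of_neg
      · have : 0 < (1 - b * g) * b ^ z := mul_pos (by linarith) ht
        exact mul_pos (mul_pos this hlb2) hgb
      · nlinarith
    · have hLpos : 0 < Real.log (b * g) := Real.log_pos h1
      apply le_of_lt
      apply div_neg_of_neg_of_pos
      · have : (1 - b * g) * b ^ z < 0 := mul_neg_of_neg_of_pos (by linarith) ht
        exact mul_neg_of_neg_of_pos (mul_neg_of_neg_of_pos this hlb2) hgb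
      · nlinarith
  -- continuity facts
  have hrpc : Continuous fun z : ℝ => b ^ z :=
    continuous_iff_continuousAt.2 fun x => Real.continuousAt_const_rpow hb.ne'
  have hGcont : ContinuousOn G (Set.Icc 0 1) :=
    fun z hz => (hGderiv z (hAne z hz)).continuousAt.continuousWithinAt
  have hG''cont : ContinuousOn G'' (Set.Icc 0 1) := by
    apply ContinuousOn.div
    · exact (((continuous_const.mul hrpc).mul continuous_const).mul
        continuous_const).continuousOn
    · exact (((continuous_const.add (continuous_const.mul hrpc)).pow 2).mul
        continuous_const).continuousOn
    · intro z hz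
      exact mul_ne_zero (pow_ne_zero 2 (hAne z hz)) hL
  -- interior facts
  have hint : ∀ x ∈ interior (Set.Icc (0:ℝ) 1), x ∈ Set.Icc (0:ℝ) 1 := by
    intro x hx
    rw [interior_Icc] at hx
    exact Set.Ioo_subset_Icc_self hx
  -- assemble IsExposureCurve
  have hmono : MonotoneOn G (Set.Icc 0 1) := by
    refine (strictMonoOn_of_hasDerivWithinAt_pos (convex_Icc 0 1) hGcont
      (fun x hx => ?_) (fun x hx => hG'pos x (hint x hx))).monotoneOn
    exact (hGderiv x (hAne x (hint x hx))).hasDerivWithinAt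
  have hconc : ConcaveOn ℝ (Set.Icc 0 1) G := by
    refine concaveOn_of_hasDerivWithinAt2_nonpos (convex_Icc 0 1) hGcont
      (fun x hx => (hGderiv x (hAne x (hint x hx))).hasDerivWithinAt)
      (fun x hx => (hG''deriv x (hAne x (hint x hx))).hasDerivWithinAt)
      (fun x hx => hG''nonpos x (hint x hx))
  have hG0 : G 0 = 0 := by
    show Real.log (((g - 1) * b + (1 - b * g) * b ^ (0:ℝ)) / (1 - b)) /
      Real.log (b * g) = 0
    rw [Real.rpow_zero]
    rw [show (g - 1) * b + (1 - b * g) * 1 = 1 - b by ring, div_self h1b,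
      Real.log_one, zero_div]
  have hG1 : G 1 = 1 := by
    show Real.log (((g - 1) * b + (1 - b * g) * b ^ (1:ℝ)) / (1 - b)) /
      Real.log (b * g) = 1
    rw [Real.rpow_one,
      show (g - 1) * b + (1 - b * g) * b = b * g * (1 - b) by ring,
      mul_div_assoc, div_self h1b, mul_one, div_self hL]
  refine ⟨hpos, ⟨hmono, hconc, hG0, hG1, G', G'', hGwithin,
    (fun z hz => (hG''deriv z (hAne z hz)).hasDerivWithinAt), hG''cont,
    hG'pos 0 (by constructor <;> norm_num)⟩, hGwithin, ?_, ?_⟩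
  · show (1 - b * g) * b ^ (1:ℝ) * Real.log b /
        (((g - 1) * b + (1 - b * g) * b ^ (1:ℝ)) * Real.log (b * g)) /
      ((1 - b * g) * b ^ (0:ℝ) * Real.log b /
        (((g - 1) * b + (1 - b * g) * b ^ (0:ℝ)) * Real.log (b * g))) = 1 / g
    rw [Real.rpow_one, Real.rpow_zero,
      show (g - 1) * b + (1 - b * g) * b = b * g * (1 - b) by ring,
      show (g - 1) * b + (1 - b * g) * 1 = 1 - b by ring]
    field_simp
  · show 1 / ((1 - b * g) * b ^ (0:ℝ) * Real.log b /
        (((g - 1) * b + (1 - b * g) * b ^ (0:ℝ)) * Real.log (b * g))) = _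
    rw [Real.rpow_zero, show (g - 1) * b + (1 - b * g) * 1 = 1 - b by ring]
    have hbg1' : b * g - 1 ≠ 0 := sub_ne_zero.2 hbg
    field_simp
    ring
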